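/- Let p be a prime, let f : ℂ → ℂ have a primitive F on ℍ, let γ₀, …, γ_{p−1} be real 2×2 matrices with positive determinant, and let a_p ∈ ℂ, a_p ≠ 0, be such that Σ_{j=0}^{p−1} (f|₂γ_j)(z) = a_p·f(z) for all z ∈ ℍ. Let σ be a permutation of {0,…,p−1} with σ(0) = 0, and fix τ ∈ ℍ. For n ∈ ℕ and 0 ≤ a < pⁿ with base-p digits a = Σ_{i<n} aᵢ pⁱ (0 ≤ aᵢ ≤ p−1), define the matrix products g_a = γ_{σ(a_{n−1})} ⋯ γ_{σ(a_1)} γ_{σ(a_0)} and h_a = γ_{σ((p−a_{n−1}) mod p)} ⋯ γ_{σ((p−a_1) mod p)} γ_{σ((p−a_0) mod p)}, and set μ(n,a) = a_p^{−n}·(F(h_a·τ) − F(g_a·τ)). Then μ satisfies the p-adic distribution property: for all n ∈ ℕ and all 0 ≤ a < pⁿ, μ(n,a) = Σ_{j=0}^{p−1} μ(n+1, a + j·pⁿ). -/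

import Mathlib

/-- The Möbius action of a real `2×2` matrix on `ℂ`: `A·z = (az+b)/(cz+d)`. -/
noncomputable def moebius (A : Matrix (Fin 2) (Fin 2) ℝ) (z : ℂ) : ℂ :=
  ((A 0 0 : ℂ) * z + (A 0 1 : ℂ)) / ((A 1 0 : ℂ) * z + (A 1 1 : ℂ))

/-- The weight-2 slash of `f : ℂ → ℂ` by `A`: `(f|₂A)(z) = det(A)·(cz+d)⁻²·f(A·z)`. -/
noncomputable def slashTwo (f : ℂ → ℂ) (A : Matrix (Fin 2) (Fin 2) ℝ) (z : ℂ) : ℂ :=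
  (A.det : ℂ) * ((A 1 0 : ℂ) * z + (A 1 1 : ℂ)) ^ (-2 : ℤ) * f (moebius A z)

/-- Given matrices `γ₀, …, γ_{p−1}` and `n, a ∈ ℕ` with base-`p` digits
`a = a₀ + a₁p + ⋯`, the matrix product `γ_{a_{n−1}} ⋯ γ_{a_1} γ_{a_0}`
(leftmost factor indexed by the top digit). -/
def digitProd (p : ℕ) (hp : 0 < p) (γ : Fin p → Matrix (Fin 2) (Fin 2) ℝ) :
    ℕ → ℕ → Matrix (Fin 2) (Fin 2) ℝ
  | 0, _ => 1
  | n + 1, a => digitProd p hp γ n (a / p) * γ ⟨a % p, Nat.mod_lt a hp⟩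

lemma den_ne {A : Matrix (Fin 2) (Fin 2) ℝ} (hd : A.det ≠ 0) {z : ℂ} (hz : z.im ≠ 0) :
    (A 1 0 : ℂ) * z + (A 1 1 : ℂ) ≠ 0 := by
  rcases eq_or_ne (A 1 0) 0 with h | h
  · have hA11 : A 1 1 ≠ 0 := by
      intro h11
      apply hd
      rw [Matrix.det_fin_two, h, h11]; ring
    simp [h, hA11]
  · intro hc
    have := congrArg Complex.im hc
    simp [Complex.add_im, Complex.mul_im] at this
    rcases this with h' | h' <;> simp_all

lemma moebius_im (A : Matrix (Fin 2) (Fin 2) ℝ) (z : ℂ) :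
    (moebius A z).im = A.det * z.im / Complex.normSq ((A 1 0 : ℂ) * z + (A 1 1 : ℂ)) := by
  rw [moebius, Complex.div_im, Matrix.det_fin_two]
  simp [Complex.normSq_apply, Complex.add_im, Complex.add_re, Complex.mul_im, Complex.mul_re]
  ring

lemma moebius_im_pos {A : Matrix (Fin 2) (Fin 2) ℝ} (hd : 0 < A.det) {z : ℂ} (hz : 0 < z.im) :
    0 < (moebius A z).im := by
  rw [moebius_im]
  have hden := den_ne hd.ne' hz.ne'
  exact div_pos (mul_pos hd hz) (Complex.normSq_pos.2 hden)

lemma moebius_comp {A B : Matrix (Fin 2) (Fin 2) ℝ} (hA : 0 < A.det) (hB : 0 < B.det)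
    {z : ℂ} (hz : 0 < z.im) : moebius (A * B) z = moebius A (moebius B z) := by
  have hdB := den_ne hB.ne' hz.ne'
  have hzB := moebius_im_pos hB hz
  have hdAB : ((A*B) 1 0 : ℂ) * z + ((A*B) 1 1 : ℂ) ≠ 0 := by
    refine den_ne ?_ hz.ne'
    rw [Matrix.det_mul]; positivity
  have hdA := den_ne hA.ne' hzB.ne'
  rw [moebius, moebius, moebius] at *
  have e1 : (A 0 0 : ℂ) * (((B 0 0 : ℂ) * z + B 0 1) / ((B 1 0 : ℂ) * z + B 1 1)) + A 0 1
      = ((A 0 0 : ℂ) * ((B 0 0 : ℂ) * z + B 0 1) + A 0 1 * ((B 1 0 : ℂ) * z + B 1 1))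
        / ((B 1 0 : ℂ) * z + B 1 1) := by rw [← mul_div_assoc, div_add' _ _ _ hdB]
  have e2 : (A 1 0 : ℂ) * (((B 0 0 : ℂ) * z + B 0 1) / ((B 1 0 : ℂ) * z + B 1 1)) + A 1 1
      = ((A 1 0 : ℂ) * ((B 0 0 : ℂ) * z + B 0 1) + A 1 1 * ((B 1 0 : ℂ) * z + B 1 1))
        / ((B 1 0 : ℂ) * z + B 1 1) := by rw [← mul_div_assoc, div_add' _ _ _ hdB]
  rw [e1, e2, div_div_div_cancel_right₀ hdB]
  congr 1 <;>
  · simp only [Matrix.mul_apply, Fin.sum_univ_two]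
    push_cast
    ring

lemma moebius_hasDerivAt {A : Matrix (Fin 2) (Fin 2) ℝ} (hA : 0 < A.det) {z : ℂ} (hz : 0 < z.im) :
    HasDerivAt (moebius A) ((A.det : ℂ) * ((A 1 0 : ℂ) * z + A 1 1) ^ (-2 : ℤ)) z := by
  have hd := den_ne hA.ne' hz.ne'
  have h1 : HasDerivAt (fun w : ℂ => (A 0 0 : ℂ) * w + A 0 1) (A 0 0) z := by
    simpa using ((hasDerivAt_id z).const_mul (A 0 0 : ℂ)).add_const (A 0 1 : ℂ)
  have h2 : HasDerivAt (fun w : ℂ => (A 1 0 : ℂ) * w + A 1 1) (A 1 0) z := by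
    simpa using ((hasDerivAt_id z).const_mul (A 1 0 : ℂ)).add_const (A 1 1 : ℂ)
  have h3 := h1.div h2 hd
  refine h3.congr_deriv (Eq.symm ?_)
  have hd2 : ((A 1 0 : ℂ) * z + A 1 1) ^ 2 ≠ 0 := pow_ne_zero _ hd
  have hz2 : ((A 1 0 : ℂ) * z + A 1 1) ^ (-2 : ℤ) = (((A 1 0 : ℂ) * z + A 1 1) ^ 2)⁻¹ := by
    rw [zpow_neg, zpow_two, ← pow_two]
  rw [Matrix.det_fin_two, hz2, div_eq_mul_inv, eq_comm]
  congr 1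
  push_cast
  ring

lemma const_of_deriv_zero {H : ℂ → ℂ} (h : ∀ z : ℂ, 0 < z.im → HasDerivAt H 0 z)
    {z w : ℂ} (hz : 0 < z.im) (hw : 0 < w.im) : H z = H w := by
  have hs : IsOpen {c : ℂ | 0 < c.im} := isOpen_lt continuous_const Complex.continuous_im
  refine (convex_halfSpace_im_gt 0).is_const_of_fderivWithin_eq_zero (𝕜 := ℂ)
    (fun x hx => ((h x hx).differentiableAt).differentiableWithinAt) ?_ hz hw
  intro x hx
  rw [fderivWithin_of_isOpen hs hx]
  have := (h x hx).hasFDerivAt.fderiv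
  rw [this]
  ext1
  simp

lemma digitProd_det_pos {p : ℕ} (hp : 0 < p) (γ : Fin p → Matrix (Fin 2) (Fin 2) ℝ)
    (hdet : ∀ j, 0 < (γ j).det) : ∀ n a, 0 < (digitProd p hp γ n a).det := by
  intro n
  induction n with
  | zero => intro a; simp [digitProd]
  | succ n ih => intro a; rw [digitProd, Matrix.det_mul]; exact mul_pos (ih _) (hdet _)

lemma digitProd_succ_top {p : ℕ} (hp : 0 < p) (γ : Fin p → Matrix (Fin 2) (Fin 2) ℝ)
    {n a j : ℕ} (ha : a < p ^ n) (hj : j < p) :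
    digitProd p hp γ (n + 1) (a + j * p ^ n) = γ ⟨j, hj⟩ * digitProd p hp γ n a := by
  induction n generalizing a with
  | zero =>
    have : a = 0 := Nat.lt_one_iff.1 (by simpa using ha)
    subst this
    simp [digitProd, Nat.mod_eq_of_lt hj, Nat.div_eq_of_lt hj]
  | succ n ih =>
    have h1 : (a + j * p ^ (n + 1)) % p = a % p := by
      rw [pow_succ, ← mul_assoc, Nat.add_mul_mod_self_right]
    have h2 : (a + j * p ^ (n + 1)) / p = a / p + j * p ^ n := by
      rw [pow_succ, ← mul_assoc, Nat.add_mul_div_right _ _ hp]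
    have ha' : a / p < p ^ n := Nat.div_lt_of_lt_mul (by rw [mul_comm, ← pow_succ]; exact ha)
    conv_lhs => rw [digitProd]
    conv_rhs => rw [digitProd]
    simp only [h1, h2]
    rw [ih ha', mul_assoc]

/-- Let `p` be prime, `F` a primitive on `ℍ` of `f` with
`Σ_{j<p} f|₂γ_j = a_p·f` on `ℍ` (`a_p ≠ 0`, each `γ_j` of positive determinant), `σ` a
permutation of `{0,…,p−1}` with `σ(0) = 0` and `τ ∈ ℍ`. For `a < pⁿ` with base-`p` digits
`a = Σ aᵢpⁱ`, set `g_a = γ_{σ(a_{n−1})} ⋯ γ_{σ(a_0)}`,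
`h_a = γ_{σ((p−a_{n−1}) mod p)} ⋯ γ_{σ((p−a_0) mod p)}` and
`μ(n,a) = a_p⁻ⁿ·(F(h_a·τ) − F(g_a·τ))`. Then `μ` satisfies the `p`-adic distribution
property `μ(n,a) = Σ_{j<p} μ(n+1, a + j·pⁿ)`. -/
theorem shimura_quadratic_distribution_property (p : ℕ) (hp : p.Prime)
    (f F : ℂ → ℂ) (hF : ∀ z : ℂ, 0 < z.im → HasDerivAt F (f z) z)
    (γ : Fin p → Matrix (Fin 2) (Fin 2) ℝ) (hdet : ∀ j, 0 < (γ j).det)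
    (ap : ℂ) (hap : ap ≠ 0)
    (heig : ∀ z : ℂ, 0 < z.im → ∑ j : Fin p, slashTwo f (γ j) z = ap * f z)
    (σ : Equiv.Perm (Fin p)) (hσ0 : σ ⟨0, hp.pos⟩ = ⟨0, hp.pos⟩)
    (τ : ℂ) (hτ : 0 < τ.im) :
    ∀ n a : ℕ, a < p ^ n →
      ap ^ (-(n : ℤ)) *
          (F (moebius (digitProd p hp.pos (fun d => γ (σ (-d))) n a) τ) -
            F (moebius (digitProd p hp.pos (fun d => γ (σ d)) n a) τ)) =
        ∑ j ∈ Finset.range p,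
          ap ^ (-((n : ℤ) + 1)) *
            (F (moebius (digitProd p hp.pos (fun d => γ (σ (-d))) (n + 1) (a + j * p ^ n)) τ) -
              F (moebius (digitProd p hp.pos (fun d => γ (σ d)) (n + 1) (a + j * p ^ n)) τ)) := by
  haveI : NeZero p := ⟨hp.ne_zero⟩
  intro n a ha
  have hdG : 0 < (digitProd p hp.pos (fun d => γ (σ d)) n a).det :=
    digitProd_det_pos hp.pos _ (fun j => hdet _) n a
  have hdH : 0 < (digitProd p hp.pos (fun d => γ (σ (-d))) n a).det :=
    digitProd_det_pos hp.pos _ (fun j => hdet _) n a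
  set z := moebius (digitProd p hp.pos (fun d => γ (σ d)) n a) τ with hzdef
  set w := moebius (digitProd p hp.pos (fun d => γ (σ (-d))) n a) τ with hwdef
  have hzim : 0 < z.im := moebius_im_pos hdG hτ
  have hwim : 0 < w.im := moebius_im_pos hdH hτ
  have hstep : ∀ j : Fin p,
      ap ^ (-((n : ℤ) + 1)) *
        (F (moebius (digitProd p hp.pos (fun d => γ (σ (-d))) (n + 1) (a + (j : ℕ) * p ^ n)) τ) -
          F (moebius (digitProd p hp.pos (fun d => γ (σ d)) (n + 1) (a + (j : ℕ) * p ^ n)) τ)) =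
      ap ^ (-((n : ℤ) + 1)) *
        (F (moebius (γ (σ (-j))) w) - F (moebius (γ (σ j)) z)) := by
    intro j
    rw [digitProd_succ_top hp.pos _ ha j.isLt, digitProd_succ_top hp.pos _ ha j.isLt,
        moebius_comp (hdet _) hdH hτ, moebius_comp (hdet _) hdG hτ]
  symm
  rw [← Fin.sum_univ_eq_sum_range]
  rw [Finset.sum_congr rfl fun j _ => hstep j]
  rw [← Finset.mul_sum, Finset.sum_sub_distrib]
  have e1 : ∑ j : Fin p, F (moebius (γ (σ (-j))) w) = ∑ k : Fin p, F (moebius (γ k) w) :=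
    Equiv.sum_comp ((Equiv.neg (Fin p)).trans σ) (fun k => F (moebius (γ k) w))
  have e2 : ∑ j : Fin p, F (moebius (γ (σ j)) z) = ∑ k : Fin p, F (moebius (γ k) z) :=
    Equiv.sum_comp σ (fun k => F (moebius (γ k) z))
  rw [e1, e2]
  have key : (∑ k : Fin p, F (moebius (γ k) w)) - ap * F w
      = (∑ k : Fin p, F (moebius (γ k) z)) - ap * F z := by
    refine const_of_deriv_zero (H := fun x => (∑ k : Fin p, F (moebius (γ k) x)) - ap * F x)
      ?_ hwim hzim
    intro x hx
    have hsum : HasDerivAt (fun x => ∑ k : Fin p, F (moebius (γ k) x))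
        (∑ k : Fin p, slashTwo f (γ k) x) x := by
      apply HasDerivAt.fun_sum
      intro k _
      have h1 := moebius_hasDerivAt (hdet k) hx
      have h2 := hF _ (moebius_im_pos (hdet k) hx)
      have h3 := h2.comp x h1
      refine h3.congr_deriv (Eq.symm ?_)
      rw [slashTwo]
      ring
    have h4 := hsum.sub ((hF x hx).const_mul ap)
    refine h4.congr_deriv (Eq.symm ?_)
    rw [heig x hx]
    ring
  have hk : (∑ k : Fin p, F (moebius (γ k) w)) - (∑ k : Fin p, F (moebius (γ k) z))
      = ap * (F w - F z) := by linear_combination key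
  rw [hk, ← mul_assoc]
  congr 1
  rw [← zpow_add_one₀ hap]
  norm_num
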